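/- Let a ≥ 1, b ≥ 0, c ≥ 2 be integers such that a and b have different parity (exactly one of a, b is odd). Then for every integer n ≥ a + b, every exact 2-coloring χ of [n] contains either a rainbow solution of y = x + 2 (an x with x + 2 ≤ n and χ(x) ≠ χ(x+2)) or a monochromatic solution of y = a·x^c + b (an x ∈ [n] with a·x^c + b ≤ n and χ(x) = χ(a·x^c + b)). -/

import Mathlib

/-- upper bound, `a` and `b` of different parity.
For integers `a ≥ 1`, `b ≥ 0`, `c ≥ 2` with exactly one of `a`, `b` odd, and for every
`n ≥ a + b`, every exact `2`-coloring of `[n]` contains either a rainbow solution of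
`y = x + 2` or a monochromatic solution of `y = a·x^c + b`. -/
theorem stmt_11 (a b c : ℕ) (ha : 1 ≤ a) (hc : 2 ≤ c) (hpar : Odd a ↔ ¬ Odd b) :
    ∀ n, a + b ≤ n →
      ∀ χ : ℕ → Fin 2, (∀ col, ∃ x, 1 ≤ x ∧ x ≤ n ∧ χ x = col) →
        (∃ x, 1 ≤ x ∧ x + 2 ≤ n ∧ χ x ≠ χ (x + 2)) ∨
        (∃ x, 1 ≤ x ∧ x ≤ n ∧ a * x ^ c + b ≤ n ∧ χ x = χ (a * x ^ c + b)) := by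
  intro n hn χ _
  by_cases hr : ∃ x, 1 ≤ x ∧ x + 2 ≤ n ∧ χ x ≠ χ (x + 2)
  · exact Or.inl hr
  push_neg at hr
  right
  have hab : Odd (a + b) := by
    rcases Nat.even_or_odd a with haeven | haodd
    · have hb : Odd b := by
        by_contra h
        exact (Nat.not_odd_iff_even.mpr haeven) (hpar.mpr h)
      exact haeven.add_odd hb
    · have hb : ¬ Odd b := hpar.mp haodd
      exact haodd.add_even (Nat.not_odd_iff_even.mp hb)
  have key : ∀ m, Odd m → m ≤ n → χ 1 = χ m := by
    intro m
    induction m using Nat.strong_induction_on with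
    | _ m ih =>
      intro hodd hle
      rcases hodd with ⟨k, hk⟩
      rcases Nat.eq_zero_or_pos k with rfl | hk0
      · simp [hk]
      · have hm : m = (m - 2) + 2 := by omega
        have h1 : χ 1 = χ (m - 2) := ih (m - 2) (by omega) ⟨k - 1, by omega⟩ (by omega)
        have h2 : χ (m - 2) = χ (m - 2 + 2) := hr (m - 2) (by omega) (by omega)
        rw [h1, h2, ← hm]
  have h1 : χ 1 = χ (a + b) := key (a + b) hab hn
  exact ⟨1, le_refl 1, by omega, by simpa using hn, by simpa using h1⟩
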